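/- Let α ∈ (0,1). There exists a constant c₀ = c₀(α) < ∞ such that for every a > 0, g(a) := ∫₀^a [t^{α−1} − (1+t)^{α−1}] (1 − t/a)^{α−1} dt ≤ c₀; that is, sup_{a ∈ (0,∞)} g(a) is finite. -/

import Mathlib

open MeasureTheory Set Filter
open scoped Topology
open intervalIntegral in
lemma my_integral_rpow {r a b : ℝ} (h : -1 < r) : ∫ x in a..b, x ^ r = (b ^ (r+1) - a ^ (r+1))/(r+1) := integral_rpow (Or.inl h)

section
variable {α a : ℝ}

lemma fac_eqOn (hα : α ∈ Set.Ioo (0:ℝ) 1) (ha : 0 < a) :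
    EqOn (fun t => (1 - t / a) ^ (α - 1))
      (fun t => a ^ (1 - α) * (a - t) ^ (α - 1)) (Ioc (a/2) a) := by
  intro t ht
  have h1 : 1 - t / a = (a - t) / a := by field_simp
  have h2 : (1:ℝ) - α = -(α - 1) := by ring
  simp only
  rw [h1, Real.div_rpow (by linarith [ht.2] : (0:ℝ) ≤ a - t) ha.le,
    div_eq_mul_inv, mul_comm, h2, Real.rpow_neg ha.le]

lemma sub_rpow_intInt (hα : α ∈ Set.Ioo (0:ℝ) 1) (ha : 0 < a) :
    IntervalIntegrable (fun x : ℝ => (a - x) ^ (α - 1)) volume (a/2) a := by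
  have h := (intervalIntegral.intervalIntegrable_rpow' (by linarith [hα.1] : (-1:ℝ) < α - 1)
    (a := 0) (b := a/2)).comp_sub_left a
  have h2 : IntervalIntegrable (fun x : ℝ => (a - x) ^ (α - 1)) volume a (a/2) := by
    simpa [sub_half] using h
  exact h2.symm

lemma fac_int (hα : α ∈ Set.Ioo (0:ℝ) 1) (ha : 0 < a) :
    IntegrableOn (fun t => (1 - t / a) ^ (α - 1)) (Ioc (a/2) a) := by
  have hI : IntegrableOn (fun t => a ^ (1 - α) * (a - t) ^ (α - 1)) (Ioc (a/2) a) :=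
    (intervalIntegrable_iff_integrableOn_Ioc_of_le (by linarith)).mp
      ((sub_rpow_intInt hα ha).const_mul _)
  exact hI.congr_fun (fun t ht => ((fac_eqOn hα ha) ht).symm) measurableSet_Ioc

lemma fac_integral (hα : α ∈ Set.Ioo (0:ℝ) 1) (ha : 0 < a) :
    ∫ t in Ioc (a/2) a, (1 - t / a) ^ (α - 1)
      = a ^ (1 - α) * ((a/2) ^ α / α) := by
  rw [setIntegral_congr_fun measurableSet_Ioc (fac_eqOn hα ha), integral_const_mul]
  congr 1
  rw [← intervalIntegral.integral_of_le (by linarith : a/2 ≤ a)]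
  rw [intervalIntegral.integral_comp_sub_left (fun x : ℝ => x ^ (α - 1)) a]
  rw [sub_self, sub_half]
  rw [my_integral_rpow (by linarith [hα.1])]
  rw [sub_add_cancel, Real.zero_rpow (ne_of_gt hα.1)]
  ring

end

section
variable {α a : ℝ}

lemma bern_neg' {p s : ℝ} (hp0 : -1 < p) (hp1 : p < 0) (hs : 0 ≤ s) :
    1 + p * s ≤ (1 + s) ^ p := by
  have hs1 : (0:ℝ) < 1 + s := by linarith
  have h1 : (1 + s) ^ (-p) ≤ 1 + (-p) * s :=
    rpow_one_add_le_one_add_mul_self (by linarith) (by linarith) (by linarith)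
  have hpos : (0:ℝ) < (1 + s) ^ (-p) := Real.rpow_pos_of_pos hs1 _
  have h2 : ((1 + (-p) * s))⁻¹ ≤ ((1 + s) ^ (-p))⁻¹ := inv_anti₀ hpos h1
  have h3 : ((1 + s) ^ (-p))⁻¹ = (1 + s) ^ p := by
    rw [Real.rpow_neg hs1.le, inv_inv]
  rw [h3] at h2
  refine le_trans ?_ h2
  have hd : (0:ℝ) < 1 + (-p) * s := by nlinarith
  rw [inv_eq_one_div, le_div_iff₀ hd]
  nlinarith [sq_nonneg (p*s)]

lemma diff_le {t : ℝ} (hα : α ∈ Set.Ioo (0:ℝ) 1) (ht : 0 < t) :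
    t ^ (α - 1) - (1 + t) ^ (α - 1) ≤ (1 - α) * t ^ (α - 2) := by
  obtain ⟨h0, h1⟩ := hα
  have hs : (0:ℝ) ≤ 1 / t := by positivity
  have hB : 1 + (α - 1) * (1 / t) ≤ (1 + 1 / t) ^ (α - 1) :=
    bern_neg' (by linarith) (by linarith) hs
  have hfact : (1 + t) ^ (α - 1) = t ^ (α - 1) * (1 + 1 / t) ^ (α - 1) := by
    rw [← Real.mul_rpow ht.le (by positivity)]
    congr 1
    field_simp
    ring
  have ht1 : t ^ (α - 1) * (1 / t) = t ^ (α - 2) := by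
    rw [one_div, ← Real.rpow_neg_one t, ← Real.rpow_add ht]
    ring_nf
  have hge : t ^ (α - 1) * (1 + (α - 1) * (1 / t)) ≤ (1 + t) ^ (α - 1) := by
    rw [hfact]
    exact mul_le_mul_of_nonneg_left hB (Real.rpow_nonneg ht.le _)
  have hexp : t ^ (α - 1) * (1 + (α - 1) * (1 / t))
      = t ^ (α - 1) + (α - 1) * t ^ (α - 2) := by
    rw [mul_add, mul_one, ← ht1]; ring
  nlinarith [hge, hexp]

lemma diff_nonneg {t : ℝ} (hα : α ∈ Set.Ioo (0:ℝ) 1) (ht : 0 < t) :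
    0 ≤ t ^ (α - 1) - (1 + t) ^ (α - 1) := by
  have := Real.rpow_le_rpow_of_nonpos ht (by linarith : t ≤ 1 + t)
    (by linarith [hα.2] : α - 1 ≤ 0)
  linarith

lemma diff_le_rpow {t : ℝ} (ht : 0 ≤ t) :
    t ^ (α - 1) - (1 + t) ^ (α - 1) ≤ t ^ (α - 1) := by
  have : (0:ℝ) ≤ (1 + t) ^ (α - 1) := Real.rpow_nonneg (by linarith) _
  linarith

lemma half_pow_eq (hα : α ∈ Set.Ioo (0:ℝ) 1) : ((1:ℝ)/2) ^ (α - 1) = 2 ^ (1 - α) := by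
  rw [one_div, Real.inv_rpow (by norm_num : (0:ℝ) ≤ 2), ← Real.rpow_neg (by norm_num)]
  norm_num

lemma fac_le_left (hα : α ∈ Set.Ioo (0:ℝ) 1) (ha : 0 < a) {t : ℝ}
    (ht : t ∈ Ioc 0 (a/2)) : (1 - t / a) ^ (α - 1) ≤ 2 ^ (1 - α) := by
  have hta : t / a ≤ 1/2 := by
    rw [div_le_div_iff₀ ha (by norm_num : (0:ℝ) < 2)]
    linarith [ht.2]
  have h := Real.rpow_le_rpow_of_nonpos (by norm_num : (0:ℝ) < 1/2)
    (by linarith : 1/2 ≤ 1 - t / a) (by linarith [hα.2] : α - 1 ≤ 0)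
  rw [half_pow_eq hα] at h
  exact h

lemma F_int1 (hα : α ∈ Set.Ioo (0:ℝ) 1) (ha : 0 < a) :
    IntegrableOn (fun t =>
      (t ^ (α - 1) - (1 + t) ^ (α - 1)) * (1 - t / a) ^ (α - 1)) (Ioc 0 (a/2)) := by
  have hg : IntegrableOn (fun t : ℝ => 2 ^ (1 - α) * t ^ (α - 1)) (Ioc 0 (a/2)) :=
    (intervalIntegrable_iff_integrableOn_Ioc_of_le (by linarith)).mp
      ((intervalIntegral.intervalIntegrable_rpow' (by linarith [hα.1])).const_mul _)
  refine hg.mono' ?_ ?_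
  · exact (Measurable.aestronglyMeasurable (by fun_prop)).restrict
  · rw [ae_restrict_iff' measurableSet_Ioc]
    refine ae_of_all _ fun t ht => ?_
    have ht0 : 0 < t := ht.1
    have hfac0 : (0:ℝ) ≤ (1 - t / a) ^ (α - 1) := by
      apply Real.rpow_nonneg
      have : t / a ≤ 1 := by
        rw [div_le_one ha]; linarith [ht.2]
      linarith
    have hd0 := diff_nonneg hα ht0
    have hd1 := diff_le_rpow (α := α) ht0.le
    have hfac1 := fac_le_left hα ha ht
    rw [Real.norm_eq_abs, abs_of_nonneg (mul_nonneg hd0 hfac0)]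
    have h2 : (0:ℝ) ≤ t ^ (α - 1) := Real.rpow_nonneg ht0.le _
    nlinarith

lemma F_int2 (hα : α ∈ Set.Ioo (0:ℝ) 1) (ha : 0 < a) :
    IntegrableOn (fun t =>
      (t ^ (α - 1) - (1 + t) ^ (α - 1)) * (1 - t / a) ^ (α - 1)) (Ioc (a/2) a) := by
  have hg : IntegrableOn (fun t : ℝ => (a/2) ^ (α - 1) * (1 - t / a) ^ (α - 1))
      (Ioc (a/2) a) := (fac_int hα ha).const_mul _
  refine hg.mono' ?_ ?_
  · exact (Measurable.aestronglyMeasurable (by fun_prop)).restrict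
  · rw [ae_restrict_iff' measurableSet_Ioc]
    refine ae_of_all _ fun t ht => ?_
    have ht0 : 0 < t := lt_trans (by linarith) ht.1
    have hfac0 : (0:ℝ) ≤ (1 - t / a) ^ (α - 1) := by
      apply Real.rpow_nonneg
      have : t / a ≤ 1 := by rw [div_le_one ha]; exact ht.2
      linarith
    have hd0 := diff_nonneg hα ht0
    have hd1 : t ^ (α - 1) - (1 + t) ^ (α - 1) ≤ (a/2) ^ (α - 1) :=
      le_trans (diff_le_rpow ht0.le)
        (Real.rpow_le_rpow_of_nonpos (by linarith) ht.1.le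
          (by linarith [hα.2]))
    rw [Real.norm_eq_abs, abs_of_nonneg (mul_nonneg hd0 hfac0)]
    exact mul_le_mul_of_nonneg_right hd1 hfac0

end

section
variable {α a : ℝ}

lemma piece1_le (hα : α ∈ Set.Ioo (0:ℝ) 1) (ha : 0 < a) :
    ∫ t in Ioc 0 (a/2),
      (t ^ (α - 1) - (1 + t) ^ (α - 1)) * (1 - t / a) ^ (α - 1)
      ≤ 2 ^ (1 - α) / α := by
  obtain ⟨h0, h1⟩ := hα
  set b := a/2 with hb
  have hb0 : 0 < b := by positivity
  have hint_t : IntervalIntegrable (fun t : ℝ => t ^ (α - 1)) volume 0 b :=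
    intervalIntegral.intervalIntegrable_rpow' (by linarith)
  have hint_s : IntervalIntegrable (fun t : ℝ => (1 + t) ^ (α - 1)) volume 0 b := by
    have h := (intervalIntegral.intervalIntegrable_rpow' (r := α - 1)
      (by linarith) (a := 1) (b := 1 + b)).comp_add_left 1
    simpa using h
  have hdiff : IntegrableOn (fun t : ℝ => t ^ (α - 1) - (1 + t) ^ (α - 1)) (Ioc 0 b) :=
    (intervalIntegrable_iff_integrableOn_Ioc_of_le hb0.le).mp (hint_t.sub hint_s)
  have hmaj : IntegrableOn
      (fun t : ℝ => 2 ^ (1 - α) * (t ^ (α - 1) - (1 + t) ^ (α - 1))) (Ioc 0 b) :=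
    hdiff.const_mul _
  have hmono : (∫ t in Ioc 0 b,
      (t ^ (α - 1) - (1 + t) ^ (α - 1)) * (1 - t / a) ^ (α - 1))
      ≤ ∫ t in Ioc 0 b, 2 ^ (1 - α) * (t ^ (α - 1) - (1 + t) ^ (α - 1)) := by
    refine setIntegral_mono_on (F_int1 ⟨h0, h1⟩ ha) hmaj measurableSet_Ioc fun t ht => ?_
    have hd0 := diff_nonneg (α := α) ⟨h0, h1⟩ ht.1
    have hfac1 := fac_le_left ⟨h0, h1⟩ ha ht
    calc (t ^ (α - 1) - (1 + t) ^ (α - 1)) * (1 - t / a) ^ (α - 1)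
        ≤ (t ^ (α - 1) - (1 + t) ^ (α - 1)) * 2 ^ (1 - α) :=
          mul_le_mul_of_nonneg_left hfac1 hd0
      _ = 2 ^ (1 - α) * (t ^ (α - 1) - (1 + t) ^ (α - 1)) := by ring
  refine hmono.trans ?_
  rw [integral_const_mul]
  have hJ : (∫ t in Ioc 0 b, (t ^ (α - 1) - (1 + t) ^ (α - 1)))
      = b ^ α / α - ((1 + b) ^ α - 1) / α := by
    rw [← intervalIntegral.integral_of_le hb0.le,
      intervalIntegral.integral_sub hint_t hint_s]
    have e1 : (∫ t in (0:ℝ)..b, t ^ (α - 1)) = b ^ α / α := by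
      rw [my_integral_rpow (by linarith)]
      rw [sub_add_cancel, Real.zero_rpow (ne_of_gt h0)]
      ring
    have e2 : (∫ t in (0:ℝ)..b, (1 + t) ^ (α - 1)) = ((1 + b) ^ α - 1) / α := by
      rw [intervalIntegral.integral_comp_add_left (fun x : ℝ => x ^ (α - 1)) 1]
      rw [add_zero, my_integral_rpow (by linarith), sub_add_cancel, Real.one_rpow]
    rw [e1, e2]
  rw [hJ]
  have hle : b ^ α ≤ (1 + b) ^ α := Real.rpow_le_rpow hb0.le (by linarith) h0.le
  have : b ^ α / α - ((1 + b) ^ α - 1) / α = (b ^ α - (1 + b) ^ α + 1) / α := by ring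
  rw [this]
  have h2 : (0:ℝ) < 2 ^ (1 - α) := Real.rpow_pos_of_pos (by norm_num) _
  calc 2 ^ (1 - α) * ((b ^ α - (1 + b) ^ α + 1) / α)
      ≤ 2 ^ (1 - α) * (1 / α) := by
        apply mul_le_mul_of_nonneg_left _ h2.le
        gcongr
        linarith
    _ = 2 ^ (1 - α) / α := by ring

lemma piece2_le (hα : α ∈ Set.Ioo (0:ℝ) 1) (ha : 0 < a) {M : ℝ} (hM0 : 0 ≤ M)
    (hM : ∀ t ∈ Ioc (a/2) a, t ^ (α - 1) - (1 + t) ^ (α - 1) ≤ M) :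
    ∫ t in Ioc (a/2) a,
      (t ^ (α - 1) - (1 + t) ^ (α - 1)) * (1 - t / a) ^ (α - 1)
      ≤ M * (a ^ (1 - α) * ((a/2) ^ α / α)) := by
  have hmono : (∫ t in Ioc (a/2) a,
      (t ^ (α - 1) - (1 + t) ^ (α - 1)) * (1 - t / a) ^ (α - 1))
      ≤ ∫ t in Ioc (a/2) a, M * (1 - t / a) ^ (α - 1) := by
    refine setIntegral_mono_on (F_int2 hα ha) ((fac_int hα ha).const_mul _)
      measurableSet_Ioc fun t ht => ?_
    have hfac0 : (0:ℝ) ≤ (1 - t / a) ^ (α - 1) := by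
      apply Real.rpow_nonneg
      have : t / a ≤ 1 := by rw [div_le_one ha]; exact ht.2
      linarith
    exact mul_le_mul_of_nonneg_right (hM t ht) hfac0
  refine hmono.trans ?_
  rw [integral_const_mul, fac_integral hα ha]

end

lemma half_rpow' {a : ℝ} (ha : 0 < a) (p : ℝ) : (a/2) ^ p = a ^ p * 2 ^ (-p) := by
  rw [Real.div_rpow ha.le (by norm_num : (0:ℝ) ≤ 2), Real.rpow_neg (by norm_num),
    div_eq_mul_inv]

theorem stmt_18 (α : ℝ) (hα : α ∈ Set.Ioo (0:ℝ) 1) :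
    ∃ c₀ : ℝ, ∀ a > (0:ℝ),
      (∫ t in Set.Ioo (0:ℝ) a,
          (t ^ (α - 1) - (1 + t) ^ (α - 1)) * (1 - t / a) ^ (α - 1)) ≤ c₀ := by
  obtain ⟨h0, h1⟩ := hα
  refine ⟨2 ^ (1 - α) / α + 2 ^ (1 - 2*α) / α + 2 ^ (2 - 2*α) / α, fun a ha => ?_⟩
  have hsplit : (∫ t in Set.Ioo (0:ℝ) a,
      (t ^ (α - 1) - (1 + t) ^ (α - 1)) * (1 - t / a) ^ (α - 1))
      = (∫ t in Ioc (0:ℝ) (a/2),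
          (t ^ (α - 1) - (1 + t) ^ (α - 1)) * (1 - t / a) ^ (α - 1))
        + ∫ t in Ioc (a/2) a,
          (t ^ (α - 1) - (1 + t) ^ (α - 1)) * (1 - t / a) ^ (α - 1) := by
    rw [← integral_Ioc_eq_integral_Ioo,
      ← Set.Ioc_union_Ioc_eq_Ioc (by linarith : (0:ℝ) ≤ a/2) (by linarith : a/2 ≤ a),
      setIntegral_union (Ioc_disjoint_Ioc_of_le le_rfl) measurableSet_Ioc
        (F_int1 ⟨h0, h1⟩ ha) (F_int2 ⟨h0, h1⟩ ha)]
  rw [hsplit]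
  have hp1 := piece1_le ⟨h0, h1⟩ ha
  have hpos1 : (0:ℝ) < 2 ^ (1 - 2*α) / α := by positivity
  have hpos2 : (0:ℝ) < 2 ^ (2 - 2*α) / α := by positivity
  rcases le_or_gt a 1 with hcase | hcase
  · -- small a : M = (a/2)^(α-1)
    have hM : ∀ t ∈ Ioc (a/2) a, t ^ (α - 1) - (1 + t) ^ (α - 1) ≤ (a/2) ^ (α - 1) :=
      fun t ht => le_trans (diff_le_rpow (by linarith [ht.1] : (0:ℝ) ≤ t))
        (Real.rpow_le_rpow_of_nonpos (by linarith) ht.1.le (by linarith))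
    have hp2 := piece2_le ⟨h0, h1⟩ ha (Real.rpow_nonneg (by linarith) _) hM
    have halg : (a/2) ^ (α - 1) * (a ^ (1 - α) * ((a/2) ^ α / α))
        = a ^ α * 2 ^ (1 - 2*α) / α := by
      rw [half_rpow' ha, half_rpow' ha]
      have e3 : a ^ (α - 1) * a ^ (1 - α) = 1 := by
        rw [← Real.rpow_add ha]; norm_num
      have e4 : (2:ℝ) ^ (-(α - 1)) * 2 ^ (-α) = 2 ^ (1 - 2*α) := by
        rw [← Real.rpow_add (by norm_num : (0:ℝ) < 2)]; ring_nf
      calc a ^ (α - 1) * 2 ^ (-(α - 1)) * (a ^ (1 - α) * (a ^ α * 2 ^ (-α) / α))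
          = (a ^ (α - 1) * a ^ (1 - α)) * a ^ α * (2 ^ (-(α - 1)) * 2 ^ (-α)) / α := by
            ring
        _ = a ^ α * 2 ^ (1 - 2*α) / α := by rw [e3, e4]; ring
    have haa : a ^ α ≤ 1 := Real.rpow_le_one ha.le hcase h0.le
    have hfin : a ^ α * 2 ^ (1 - 2*α) / α ≤ 2 ^ (1 - 2*α) / α := by
      have : a ^ α * 2 ^ (1 - 2*α) ≤ 2 ^ (1 - 2*α) :=
        mul_le_of_le_one_left (by positivity) haa
      gcongr
    rw [halg] at hp2
    linarith
  · -- large a : M = (1-α) * (a/2)^(α-2)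
    have hM : ∀ t ∈ Ioc (a/2) a, t ^ (α - 1) - (1 + t) ^ (α - 1)
        ≤ (1 - α) * (a/2) ^ (α - 2) := fun t ht => by
      have ht0 : (0:ℝ) < t := lt_trans (by linarith) ht.1
      refine le_trans (diff_le ⟨h0, h1⟩ ht0) ?_
      have := Real.rpow_le_rpow_of_nonpos (by linarith : (0:ℝ) < a/2)
        ht.1.le (by linarith : α - 2 ≤ 0)
      exact mul_le_mul_of_nonneg_left this (by linarith)
    have hM0 : (0:ℝ) ≤ (1 - α) * (a/2) ^ (α - 2) := by
      apply mul_nonneg (by linarith) (Real.rpow_nonneg (by linarith) _)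
    have hp2 := piece2_le ⟨h0, h1⟩ ha hM0 hM
    have halg : (1 - α) * (a/2) ^ (α - 2) * (a ^ (1 - α) * ((a/2) ^ α / α))
        = (1 - α) * a ^ (α - 1) * 2 ^ (2 - 2*α) / α := by
      rw [half_rpow' ha, half_rpow' ha]
      have e3 : a ^ (α - 2) * a ^ (1 - α) * a ^ α = a ^ (α - 1) := by
        rw [← Real.rpow_add ha, ← Real.rpow_add ha]; ring_nf
      have e4 : (2:ℝ) ^ (-(α - 2)) * 2 ^ (-α) = 2 ^ (2 - 2*α) := by
        rw [← Real.rpow_add (by norm_num : (0:ℝ) < 2)]; ring_nf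
      calc (1 - α) * (a ^ (α - 2) * 2 ^ (-(α - 2))) * (a ^ (1 - α) * (a ^ α * 2 ^ (-α) / α))
          = (1 - α) * (a ^ (α - 2) * a ^ (1 - α) * a ^ α) * (2 ^ (-(α - 2)) * 2 ^ (-α)) / α := by
            ring
        _ = (1 - α) * a ^ (α - 1) * 2 ^ (2 - 2*α) / α := by rw [e3, e4]
    have haa : a ^ (α - 1) ≤ 1 :=
      Real.rpow_le_one_of_one_le_of_nonpos hcase.le (by linarith)
    have hfin : (1 - α) * a ^ (α - 1) * 2 ^ (2 - 2*α) / α ≤ 2 ^ (2 - 2*α) / α := by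
      have h5 : (1 - α) * a ^ (α - 1) ≤ 1 := by
        have : (0:ℝ) ≤ a ^ (α - 1) := Real.rpow_nonneg (by linarith) _
        nlinarith
      have : (1 - α) * a ^ (α - 1) * 2 ^ (2 - 2*α) ≤ 2 ^ (2 - 2*α) :=
        mul_le_of_le_one_left (by positivity) h5
      gcongr
    rw [halg] at hp2
    linarith
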